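/- Let X be a non-empty set, let Σ_Z be a σ-algebra on Z = X × {0,1} containing all finite subsets of Z, let 𝒟 be a set of probability measures on (Z, Σ_Z), and let H ⊆ {0,1}^X be a non-empty hypothesis space with Γ(h) ∈ Σ_Z for every h ∈ H. If H is universally separable, then H is well-behaved with respect to 𝒟. -/

import Mathlib

open MeasureTheory

namespace PAC

variable {X : Type*}

/-- The graph `Γ(h) = {(x,y) ∈ Z : h x = y}` of a hypothesis `h : X → {0,1}`. -/
def graph (h : X → Bool) : Set (X × Bool) := {z | h z.1 = z.2}

/-- The true error `er_D(h) = D(Z \ Γ(h))`. -/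
noncomputable def trueError [MeasurableSpace (X × Bool)]
    (D : Measure (X × Bool)) (h : X → Bool) : ℝ :=
  (D {z : X × Bool | h z.1 ≠ z.2}).toReal

/-- The sample error `ˆer_z(h) = (1/m)·#{i : h x_i ≠ y_i}`. -/
noncomputable def empError {m : ℕ} (z : Fin m → X × Bool) (h : X → Bool) : ℝ :=
  ((Finset.univ.filter fun i => h (z i).1 ≠ (z i).2).card : ℝ) / (m : ℝ)

/-- `opt_D(H) = inf_{h ∈ H} er_D(h)`. -/
noncomputable def optError [MeasurableSpace (X × Bool)]
    (D : Measure (X × Bool)) (H : Set (X → Bool)) : ℝ :=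
  ⨅ h : H, trueError D h.1

/-- `ˆopt_z(H) = inf_{h ∈ H} ˆer_z(h)`. -/
noncomputable def empOpt {m : ℕ} (z : Fin m → X × Bool) (H : Set (X → Bool)) : ℝ :=
  ⨅ h : H, empError z h.1

/-- The map `U : Z^m → [0,1]`, `z ↦ sup_{h ∈ H} |er_D(h) − ˆer_z(h)|`. -/
noncomputable def U [MeasurableSpace (X × Bool)] (H : Set (X → Bool))
    (m : ℕ) (D : Measure (X × Bool)) (z : Fin m → X × Bool) : ℝ :=
  ⨆ h : H, |trueError D h.1 - empError z h.1|

/-- The map `V : Z^m × Z^m = Z^{2m} → ℝ`,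
`(z,z') ↦ sup_{h ∈ H} |ˆer_{z'}(h) − ˆer_z(h)|`. -/
noncomputable def V (H : Set (X → Bool)) (m : ℕ)
    (p : (Fin m → X × Bool) × (Fin m → X × Bool)) : ℝ :=
  ⨆ h : H, |empError p.2 h.1 - empError p.1 h.1|

/-- `H` is well-behaved with respect to `𝒟`. -/
def WellBehaved [MeasurableSpace (X × Bool)] (H : Set (X → Bool))
    (𝒟 : Set (Measure (X × Bool))) : Prop :=
  (∀ h ∈ H, MeasurableSet (graph h)) ∧
  ∃ mH : ℕ, 0 < mH ∧ ∀ m : ℕ, mH ≤ m →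
    Measurable (V H m) ∧ ∀ D ∈ 𝒟, Measurable (U H m D)

/-- `H` has the uniform convergence property with respect to `𝒟`. -/
def UCP [MeasurableSpace (X × Bool)] (H : Set (X → Bool))
    (𝒟 : Set (Measure (X × Bool))) : Prop :=
  ∃ mH : ℕ, 0 < mH ∧
    (∀ m : ℕ, mH ≤ m → ∀ D ∈ 𝒟, Measurable (U H m D)) ∧
    ∀ ε ∈ Set.Ioo (0:ℝ) 1, ∀ δ ∈ Set.Ioo (0:ℝ) 1, ∃ m₀ : ℕ, mH ≤ m₀ ∧
      ∀ m : ℕ, m₀ ≤ m → ∀ D ∈ 𝒟,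
        ENNReal.ofReal (1 - δ) ≤
          Measure.pi (fun _ : Fin m => D) {z | U H m D z ≤ ε}

/-- A learning function `A` (defined on all multi-samples) whose values lie in `H`. -/
def IsLearningFunction (H : Set (X → Bool))
    (A : ∀ m : ℕ, (Fin m → X × Bool) → (X → Bool)) : Prop :=
  ∀ (m : ℕ) (z : Fin m → X × Bool), A m z ∈ H

/-- The learning function `A` is PAC with respect to `𝒟`. -/
def IsPAC [MeasurableSpace (X × Bool)] (H : Set (X → Bool))
    (𝒟 : Set (Measure (X × Bool)))
    (A : ∀ m : ℕ, (Fin m → X × Bool) → (X → Bool)) : Prop :=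
  ∀ ε ∈ Set.Ioo (0:ℝ) 1, ∀ δ ∈ Set.Ioo (0:ℝ) 1, ∃ m₀ : ℕ, 0 < m₀ ∧
    ∀ m : ℕ, m₀ ≤ m → ∀ D ∈ 𝒟, ∃ C : Set (Fin m → X × Bool),
      MeasurableSet C ∧
      C ⊆ {z | trueError D (A m z) - optError D H ≤ ε} ∧
      ENNReal.ofReal (1 - δ) ≤ Measure.pi (fun _ : Fin m => D) C

/-- `H` is PAC learnable with respect to `𝒟`. -/
def PACLearnable [MeasurableSpace (X × Bool)] (H : Set (X → Bool))
    (𝒟 : Set (Measure (X × Bool))) : Prop :=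
  ∃ A : ∀ m : ℕ, (Fin m → X × Bool) → (X → Bool),
    IsLearningFunction H A ∧ IsPAC H 𝒟 A

/-- The learning function `A` nearly minimizes the sample error. -/
def IsNMSE (H : Set (X → Bool))
    (A : ∀ m : ℕ, (Fin m → X × Bool) → (X → Bool)) : Prop :=
  ∀ ε ∈ Set.Ioo (0:ℝ) 1, ∃ m₀ : ℕ, 0 < m₀ ∧
    ∀ m : ℕ, m₀ ≤ m → ∀ z : Fin m → X × Bool,
      empError z (A m z) - empOpt z H ≤ ε

/-- `H` shatters the finite set `A ⊆ X`. -/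
def Shatters (H : Set (X → Bool)) (A : Finset X) : Prop :=
  ∀ f : X → Bool, ∃ h ∈ H, ∀ x ∈ A, h x = f x

/-- `vc(H) < ∞`. -/
def FiniteVC (H : Set (X → Bool)) : Prop :=
  ∃ d : ℕ, ∀ A : Finset X, Shatters H A → A.card ≤ d

/-- A discrete uniform distribution on `(Z, Σ_Z)`. -/
def IsDiscreteUniform [MeasurableSpace (X × Bool)]
    (D : Measure (X × Bool)) : Prop :=
  ∃ (ℓ : ℕ), 0 < ℓ ∧ ∃ z : Fin ℓ → X × Bool,
    D = (ℓ : ENNReal)⁻¹ • ∑ j, Measure.dirac (z j)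


/-- `H` is universally separable: some countable `H₀ ⊆ H` is pointwise dense in `H`
(in the eventually-equal sense). -/
def UniversallySeparable {X : Type*} (H : Set (X → Bool)) : Prop :=
  ∃ H₀ : Set (X → Bool), H₀ ⊆ H ∧ H₀.Countable ∧
    ∀ h ∈ H, ∃ g : ℕ → (X → Bool), (∀ n, g n ∈ H₀) ∧
      ∀ x : X, ∃ N : ℕ, ∀ n : ℕ, N ≤ n → g n x = h x


section AuxWB

lemma aux_empError_nonneg {m : ℕ} (z : Fin m → X × Bool) (h : X → Bool) :
    0 ≤ empError z h := by unfold empError; positivity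

lemma aux_empError_le_one {m : ℕ} (z : Fin m → X × Bool) (h : X → Bool) :
    empError z h ≤ 1 := by
  unfold empError
  rcases Nat.eq_zero_or_pos m with hm | hm
  · subst hm; simp
  · rw [div_le_one (by exact_mod_cast hm)]
    exact_mod_cast (Finset.card_filter_le _ _).trans (by simp)

lemma aux_empError_congr {m : ℕ} (z : Fin m → X × Bool) {h₀ h : X → Bool}
    (hag : ∀ i, h₀ (z i).1 = h (z i).1) : empError z h₀ = empError z h := by
  unfold empError
  have : Finset.filter (fun i => h₀ (z i).1 ≠ (z i).2) Finset.univ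
      = Finset.filter (fun i => h (z i).1 ≠ (z i).2) Finset.univ :=
    Finset.filter_congr (fun i _ => by rw [hag i])
  rw [this]

lemma aux_trueError_nonneg [MeasurableSpace (X × Bool)] (D : Measure (X × Bool))
    (h : X → Bool) : 0 ≤ trueError D h := ENNReal.toReal_nonneg

lemma aux_trueError_le_one [MeasurableSpace (X × Bool)] (D : Measure (X × Bool))
    [IsProbabilityMeasure D] (h : X → Bool) : trueError D h ≤ 1 := by
  have := prob_le_one (μ := D) (s := {z : X × Bool | h z.1 ≠ z.2})
  calc (D {z : X × Bool | h z.1 ≠ z.2}).toReal ≤ (1 : ENNReal).toReal :=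
        ENNReal.toReal_mono ENNReal.one_ne_top this
    _ = 1 := by simp

lemma aux_measurable_empError [MeasurableSpace (X × Bool)] {m : ℕ} {h : X → Bool}
    (hg : MeasurableSet (graph h)) :
    Measurable fun z : Fin m → X × Bool => empError z h := by
  have key : ∀ z : Fin m → X × Bool, empError z h
      = (∑ i, Set.indicator (graph h)ᶜ (fun _ => (1:ℝ)) (z i)) / m := by
    intro z
    classical
    unfold empError
    congr 1
    rw [Finset.card_filter]
    push_cast
    apply Finset.sum_congr rfl
    intro i _
    rw [Set.indicator_apply]
    simp [graph]
  simp only [key]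
  apply Measurable.div_const
  apply Finset.measurable_sum
  intro i _
  exact (measurable_const.indicator hg.compl).comp (measurable_pi_apply i)

lemma aux_trueError_diff_le [MeasurableSpace (X × Bool)] (D : Measure (X × Bool))
    [IsFiniteMeasure D] (h₁ h₂ : X → Bool) :
    |trueError D h₁ - trueError D h₂| ≤ (D {z : X × Bool | h₁ z.1 ≠ h₂ z.1}).toReal := by
  set A := {z : X × Bool | h₁ z.1 ≠ z.2}
  set B := {z : X × Bool | h₂ z.1 ≠ z.2}
  set S := {z : X × Bool | h₁ z.1 ≠ h₂ z.1}
  have hAB : A ⊆ B ∪ S := by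
    intro z hz
    by_cases hb : h₂ z.1 = z.2
    · right; simp only [S, Set.mem_setOf_eq]; rw [hb]; exact hz
    · left; exact hb
  have hBA : B ⊆ A ∪ S := by
    intro z hz
    by_cases hb : h₁ z.1 = z.2
    · right; simp only [S, Set.mem_setOf_eq]; rw [hb]; exact fun e => hz e.symm
    · left; exact hb
  have h1 : (D A).toReal ≤ (D B).toReal + (D S).toReal := by
    rw [← ENNReal.toReal_add (measure_ne_top D B) (measure_ne_top D S)]
    exact ENNReal.toReal_mono (by
      exact ENNReal.add_ne_top.2 ⟨measure_ne_top D B, measure_ne_top D S⟩)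
      ((measure_mono hAB).trans (measure_union_le _ _))
  have h2 : (D B).toReal ≤ (D A).toReal + (D S).toReal := by
    rw [← ENNReal.toReal_add (measure_ne_top D A) (measure_ne_top D S)]
    exact ENNReal.toReal_mono (by
      exact ENNReal.add_ne_top.2 ⟨measure_ne_top D A, measure_ne_top D S⟩)
      ((measure_mono hBA).trans (measure_union_le _ _))
  have eA : trueError D h₁ = (D A).toReal := rfl
  have eB : trueError D h₂ = (D B).toReal := rfl
  rw [abs_sub_le_iff, eA, eB]
  constructor <;> linarith

lemma aux_diffSet_eq (h₁ h₂ : X → Bool) :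
    {z : X × Bool | h₁ z.1 ≠ h₂ z.1} = symmDiff (graph h₁) (graph h₂) := by
  ext ⟨x, b⟩
  simp only [Set.mem_setOf_eq, Set.mem_symmDiff, graph]
  cases hb1 : h₁ x <;> cases hb2 : h₂ x <;> cases b <;> simp

lemma aux_real_le_of_forall_pos_le_add {a b : ℝ} (h : ∀ ε : ℝ, 0 < ε → a ≤ b + ε) :
    a ≤ b := by
  by_contra hlt
  push_neg at hlt
  have := h ((a - b) / 2) (by linarith)
  linarith

lemma aux_approx [MeasurableSpace (X × Bool)] (D : Measure (X × Bool)) [IsFiniteMeasure D]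
    {H H₀ : Set (X → Bool)} (hgraph : ∀ h ∈ H, MeasurableSet (graph h)) (hsub : H₀ ⊆ H)
    {h : X → Bool} (hh : h ∈ H) (g : ℕ → X → Bool) (hg : ∀ n, g n ∈ H₀)
    (hlim : ∀ x, ∃ N, ∀ n, N ≤ n → g n x = h x)
    (s : Finset X) {ε : ℝ} (hε : 0 < ε) :
    ∃ h₀ ∈ H₀, (∀ x ∈ s, h₀ x = h x) ∧ |trueError D h₀ - trueError D h| ≤ ε := by
  set Sn : ℕ → Set (X × Bool) := fun n => {z | g n z.1 ≠ h z.1} with hSn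
  have hSmeas : ∀ n, MeasurableSet (Sn n) := by
    intro n
    have : Sn n = symmDiff (graph (g n)) (graph h) := aux_diffSet_eq _ _
    rw [this]
    exact (hgraph _ (hsub (hg n))).symmDiff (hgraph _ hh)
  set F : ℕ → Set (X × Bool) := fun N => ⋃ n, ⋃ (_ : N ≤ n), Sn n with hF
  have hFmeas : ∀ N, MeasurableSet (F N) := fun N =>
    MeasurableSet.iUnion fun n => MeasurableSet.iUnion fun _ => hSmeas n
  have hanti : Antitone F := by
    intro N M hNM z hz
    simp only [F, Set.mem_iUnion] at hz ⊢
    obtain ⟨n, hn, hzn⟩ := hz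
    exact ⟨n, hNM.trans hn, hzn⟩
  have hempty : ⋂ N, F N = ∅ := by
    ext z
    simp only [Set.mem_iInter, Set.mem_empty_iff_false, iff_false]
    intro hz
    obtain ⟨N, hN⟩ := hlim z.1
    have := hz N
    simp only [F, Set.mem_iUnion] at this
    obtain ⟨n, hn, hzn⟩ := this
    exact hzn (hN n hn)
  have htend : Filter.Tendsto (fun N => D (F N)) Filter.atTop (nhds 0) := by
    have := tendsto_measure_iInter_atTop (μ := D)
      (fun N => (hFmeas N).nullMeasurableSet) hanti ⟨0, measure_ne_top D _⟩
    rw [hempty, measure_empty] at this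
    exact this
  have hev := htend.eventually_lt_const (show (0:ENNReal) < ENNReal.ofReal ε from
    ENNReal.ofReal_pos.2 hε)
  obtain ⟨N₁, hN₁⟩ := hev.exists_forall_of_atTop
  choose Nx hNx using hlim
  set M := max N₁ (s.sup Nx) with hM
  refine ⟨g M, hg M, ?_, ?_⟩
  · intro x hx
    exact hNx x M ((Finset.le_sup hx).trans (le_max_right _ _))
  · have h1 : |trueError D (g M) - trueError D h| ≤ (D (Sn M)).toReal :=
      aux_trueError_diff_le D (g M) h
    have hsubF : Sn M ⊆ F N₁ := by
      intro z hz
      simp only [F, Set.mem_iUnion]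
      exact ⟨M, le_max_left _ _, hz⟩
    have h2 : (D (Sn M)).toReal ≤ ε := by
      have := (measure_mono hsubF).trans_lt (hN₁ N₁ le_rfl)
      exact ENNReal.toReal_le_of_le_ofReal hε.le this.le
    exact h1.trans h2

lemma aux_iSup_subset_eq {H H₀ : Set (X → Bool)} (hsub : H₀ ⊆ H) (hH₀ : H₀.Nonempty)
    (f : (X → Bool) → ℝ) (C : ℝ) (hC : ∀ h ∈ H, f h ≤ C)
    (happ : ∀ h ∈ H, ∀ ε : ℝ, 0 < ε → ∃ h₀ ∈ H₀, f h ≤ f h₀ + ε) :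
    ⨆ h : H, f h.1 = ⨆ h : H₀, f h.1 := by
  have hbdd₀ : BddAbove (Set.range fun h : H₀ => f h.1) := by
    refine ⟨C, ?_⟩; rintro _ ⟨h, rfl⟩; exact hC _ (hsub h.2)
  have hbdd : BddAbove (Set.range fun h : H => f h.1) := by
    refine ⟨C, ?_⟩; rintro _ ⟨h, rfl⟩; exact hC _ h.2
  have hHne : H.Nonempty := hH₀.mono hsub
  haveI := hHne.to_subtype
  haveI := hH₀.to_subtype
  apply le_antisymm
  · refine ciSup_le fun h => ?_
    refine aux_real_le_of_forall_pos_le_add fun ε hε => ?_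
    obtain ⟨h₀, hh₀, hle⟩ := happ h.1 h.2 ε hε
    exact hle.trans (add_le_add (le_ciSup hbdd₀ ⟨h₀, hh₀⟩) le_rfl)
  · exact ciSup_le fun h₀ => le_ciSup hbdd ⟨h₀.1, hsub h₀.2⟩

end AuxWB

/-- A universally separable hypothesis space with measurable graphs is well-behaved
with respect to any set of probability distributions. -/
theorem universallySeparable_implies_wellBehaved
    {X : Type*} [Nonempty X] [MeasurableSpace (X × Bool)]
    (hfin : ∀ z : X × Bool, MeasurableSet {z})
    (𝒟 : Set (Measure (X × Bool)))
    (h𝒟prob : ∀ D ∈ 𝒟, IsProbabilityMeasure D)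
    (H : Set (X → Bool)) (hH : H.Nonempty)
    (hgraph : ∀ h ∈ H, MeasurableSet (graph h))
    (hus : UniversallySeparable H) :
    WellBehaved H 𝒟 := by
  classical
  obtain ⟨H₀, hsub, hcount, happrox⟩ := hus
  obtain ⟨hw, hwH⟩ := hH
  obtain ⟨g0, hg0, _⟩ := happrox hw hwH
  have hH₀ne : H₀.Nonempty := ⟨g0 0, hg0 0⟩
  haveI : Countable ↥H₀ := hcount.to_subtype
  refine ⟨hgraph, 1, one_pos, fun m _ => ⟨?_, ?_⟩⟩
  · -- V measurable
    have hV : V H m = fun p : (Fin m → X × Bool) × (Fin m → X × Bool) =>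
        ⨆ h : H₀, |empError p.2 h.1 - empError p.1 h.1| := by
      funext p
      unfold V
      apply aux_iSup_subset_eq hsub hH₀ne
        (fun h => |empError p.2 h - empError p.1 h|) 2
      · intro h _
        have h1 := aux_empError_le_one p.2 h
        have h2 := aux_empError_le_one p.1 h
        have h3 := aux_empError_nonneg p.2 h
        have h4 := aux_empError_nonneg p.1 h
        rw [abs_le]; constructor <;> linarith
      · intro h hh ε hε
        obtain ⟨g, hgm, hpt⟩ := happrox h hh
        choose N hN using hpt
        set s := (Finset.univ.image fun i => (p.1 i).1)
          ∪ (Finset.univ.image fun i => (p.2 i).1) with hs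
        set M := s.sup N with hMdef
        refine ⟨g M, hgm M, ?_⟩
        have e1 : empError p.1 (g M) = empError p.1 h :=
          aux_empError_congr _ (fun i => hN _ M (Finset.le_sup (by simp [hs])))
        have e2 : empError p.2 (g M) = empError p.2 h :=
          aux_empError_congr _ (fun i => hN _ M (Finset.le_sup (by simp [hs])))
        rw [e1, e2]
        exact le_add_of_nonneg_right hε.le
    rw [hV]
    exact Measurable.iSup fun h =>
      (((aux_measurable_empError (hgraph _ (hsub h.2))).comp measurable_snd).sub
        ((aux_measurable_empError (hgraph _ (hsub h.2))).comp measurable_fst)).abs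
  · -- U measurable
    intro D hD
    haveI := h𝒟prob D hD
    have hU : U H m D = fun z : Fin m → X × Bool =>
        ⨆ h : H₀, |trueError D h.1 - empError z h.1| := by
      funext z
      unfold U
      apply aux_iSup_subset_eq hsub hH₀ne
        (fun h => |trueError D h - empError z h|) 2
      · intro h _
        have h1 := aux_trueError_le_one D h
        have h2 := aux_empError_le_one z h
        have h3 := aux_trueError_nonneg D h
        have h4 := aux_empError_nonneg z h
        rw [abs_le]; constructor <;> linarith
      · intro h hh ε hε
        obtain ⟨g, hgm, hpt⟩ := happrox h hh
        obtain ⟨h₀, hh₀, hag, hclose⟩ := aux_approx D hgraph hsub hh g hgm hpt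
          (Finset.univ.image fun i => (z i).1) hε
        refine ⟨h₀, hh₀, ?_⟩
        have e1 : empError z h₀ = empError z h :=
          aux_empError_congr _ (fun i => hag _ (by simp))
        have tri : |trueError D h - empError z h|
            ≤ |trueError D h - trueError D h₀| + |trueError D h₀ - empError z h| :=
          abs_sub_le _ _ _
        have hc : |trueError D h - trueError D h₀| ≤ ε := by
          rw [abs_sub_comm]; exact hclose
        rw [e1]
        have := abs_nonneg (trueError D h₀ - empError z h)
        linarith
    rw [hU]
    exact Measurable.iSup fun h =>
      (measurable_const.sub (aux_measurable_empError (hgraph _ (hsub h.2)))).abs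


end PAC
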